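/- (Intra-cluster homogeneity) Under the hypotheses of the volume-regularity theorem, for each cluster V_i and all X, Y ⊆ V_i: |w(X,Y) − ρ(V_i)·Vol(X)·Vol(Y)| ≤ C(√(2k)·s + ε)·Vol(V_i), where ρ(V_i) = w(V_i,V_i)/Vol²(V_i) is the relative intra-cluster density and C is a constant independent of n. -/

import Mathlib

open Matrix BigOperators Finset

lemma ICH.dot_sum {n m : ℕ} (F : Fin m → Fin n → ℝ) (z : Fin n → ℝ) :
    z ⬝ᵥ (∑ i, F i) = ∑ i, z ⬝ᵥ F i := by
  simp only [dotProduct, Finset.sum_apply, Finset.mul_sum]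
  exact Finset.sum_comm

lemma ICH.ortho_expand {n : ℕ} (u : Fin n → Fin n → ℝ)
    (hu : ∀ i j, (u i) ⬝ᵥ (u j) = if i = j then 1 else 0) (z : Fin n → ℝ) :
    z = ∑ i, (u i ⬝ᵥ z) • u i := by
  have hUU : (Matrix.of u) * (Matrix.of u)ᵀ = 1 := by
    ext i j
    simpa [Matrix.mul_apply, Matrix.one_apply, dotProduct] using hu i j
  have hUU' : (Matrix.of u)ᵀ * (Matrix.of u) = 1 := mul_eq_one_comm.mp hUU
  funext x
  have h1 : ((Matrix.of u)ᵀ * (Matrix.of u)).mulVec z x = z x := by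
    rw [hUU', Matrix.one_mulVec]
  rw [← h1]
  simp only [Matrix.mulVec, Matrix.mul_apply, dotProduct, Finset.sum_apply,
    Pi.smul_apply, smul_eq_mul, Matrix.transpose_apply, Matrix.of_apply,
    Finset.sum_mul]
  rw [Finset.sum_comm]
  congr 1; funext i; congr 1; funext l
  ring

lemma ICH.parseval {n : ℕ} (u : Fin n → Fin n → ℝ)
    (hu : ∀ i j, (u i) ⬝ᵥ (u j) = if i = j then 1 else 0) (z : Fin n → ℝ) :
    ∑ i, (u i ⬝ᵥ z) ^ 2 = z ⬝ᵥ z := by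
  have hz := ICH.ortho_expand u hu z
  calc ∑ i, (u i ⬝ᵥ z) ^ 2 = ∑ i, z ⬝ᵥ ((u i ⬝ᵥ z) • u i) := by
        congr 1; funext i
        rw [dotProduct_smul, smul_eq_mul, dotProduct_comm z (u i)]; ring
    _ = z ⬝ᵥ (∑ i, (u i ⬝ᵥ z) • u i) := (ICH.dot_sum _ z).symm
    _ = z ⬝ᵥ z := by rw [← hz]

lemma ICH.bilinear_expand {n : ℕ} (M : Matrix (Fin n) (Fin n) ℝ)
    (μ : Fin n → ℝ) (u : Fin n → Fin n → ℝ)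
    (heig : ∀ i, M.mulVec (u i) = μ i • u i)
    (hu : ∀ i j, (u i) ⬝ᵥ (u j) = if i = j then 1 else 0) (f g : Fin n → ℝ) :
    f ⬝ᵥ M.mulVec g = ∑ i, μ i * (u i ⬝ᵥ f) * (u i ⬝ᵥ g) := by
  conv_lhs => rw [ICH.ortho_expand u hu g]
  have h2 : M.mulVec (∑ i, (u i ⬝ᵥ g) • u i) = ∑ i, (u i ⬝ᵥ g) • (μ i • u i) := by
    rw [show M.mulVec (∑ i, (u i ⬝ᵥ g) • u i)
        = M.mulVecLin (∑ i, (u i ⬝ᵥ g) • u i) from rfl]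
    rw [map_sum]
    congr 1; funext i
    rw [LinearMap.map_smul]
    simp [Matrix.mulVecLin_apply, heig i]
  rw [h2, ICH.dot_sum]
  congr 1; funext i
  rw [dotProduct_smul, dotProduct_smul, smul_eq_mul, smul_eq_mul,
    dotProduct_comm f (u i)]
  ring

lemma ICH.abs_inner_le {α : Type*} (s : Finset α) (f g : α → ℝ) :
    |∑ i ∈ s, f i * g i| ≤ Real.sqrt (∑ i ∈ s, f i ^ 2) * Real.sqrt (∑ i ∈ s, g i ^ 2) := by
  rw [abs_le]
  constructor
  · have h := Real.sum_mul_le_sqrt_mul_sqrt s f (fun i => -g i)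
    have e1 : ∑ i ∈ s, f i * -g i = -∑ i ∈ s, f i * g i := by
      simp [mul_neg]
    have e2 : ∑ i ∈ s, (-g i) ^ 2 = ∑ i ∈ s, g i ^ 2 :=
      Finset.sum_congr rfl fun i _ => by ring
    rw [e1, e2] at h
    linarith
  · exact Real.sum_mul_le_sqrt_mul_sqrt s f g

lemma ICH.mean_min {α : Type*} (V : Finset α) (d r : α → ℝ)
    (hvol : 0 < ∑ x ∈ V, d x) :
    ∑ x ∈ V, d x * (r x - (∑ x ∈ V, d x * r x) / (∑ x ∈ V, d x)) ^ 2
      ≤ ∑ x ∈ V, d x * r x ^ 2 := by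
  set vol := ∑ x ∈ V, d x with hv
  set m := ∑ x ∈ V, d x * r x with hm
  set c := m / vol with hc
  have hexp : ∑ x ∈ V, d x * (r x - c) ^ 2
      = ∑ x ∈ V, d x * r x ^ 2 - 2 * c * m + c ^ 2 * vol := by
    have : ∀ x ∈ V, d x * (r x - c) ^ 2
        = d x * r x ^ 2 - 2 * c * (d x * r x) + c ^ 2 * d x := by
      intro x _; ring
    rw [Finset.sum_congr rfl this]
    rw [Finset.sum_add_distrib, Finset.sum_sub_distrib, ← Finset.mul_sum, ← Finset.mul_sum]
  rw [hexp]
  have hcm : c * m = c ^ 2 * vol := by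
    rw [hc]; field_simp
  nlinarith [sq_nonneg c, hvol, mul_nonneg (sq_nonneg c) hvol.le]

lemma ICH.sum_small {n k : ℕ} (h : k - 1 ≤ n) (f : Fin n → ℝ) :
    ∑ i ∈ Finset.univ.filter (fun i : Fin n => (i : ℕ) < k - 1), f i
      = ∑ b : Fin (k - 1), f (Fin.castLE h b) := by
  have himg : Finset.univ.filter (fun i : Fin n => (i : ℕ) < k - 1)
      = Finset.image (Fin.castLE h) Finset.univ := by
    ext i
    simp only [Finset.mem_filter, Finset.mem_univ, true_and, Finset.mem_image]
    constructor
    · intro hi; exact ⟨⟨(i : ℕ), hi⟩, rfl⟩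
    · rintro ⟨b, -, rfl⟩; exact b.isLt
  rw [himg, Finset.sum_image (fun b _ b' _ hbb => by
    ext; exact congrArg (fun x : Fin n => (x : ℕ)) hbb)]

lemma ICH.mu_bound {n : ℕ} (W : Matrix (Fin n) (Fin n) ℝ)
    (hsym : W.IsSymm) (hW0 : ∀ i j, 0 ≤ W i j)
    (d : Fin n → ℝ) (hd : ∀ i, d i = ∑ j, W i j) (hdpos : ∀ i, 0 < d i)
    (hdsum : (∑ i, d i) = 1)
    (MD : Matrix (Fin n) (Fin n) ℝ)
    (hMD : MD = (Matrix.of fun i j => W i j / (Real.sqrt (d i) * Real.sqrt (d j)))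
            - vecMulVec (fun i => Real.sqrt (d i)) (fun i => Real.sqrt (d i)))
    (μv : ℝ) (uv : Fin n → ℝ)
    (heig : MD.mulVec uv = μv • uv) (hnorm : uv ⬝ᵥ uv = 1) :
    |μv| ≤ 2 := by
  have hsq : ∀ i, Real.sqrt (d i) * Real.sqrt (d i) = d i :=
    fun i => Real.mul_self_sqrt (hdpos i).le
  have hsne : ∀ i, Real.sqrt (d i) ≠ 0 :=
    fun i => ne_of_gt (Real.sqrt_pos.mpr (hdpos i))
  set a : Fin n → ℝ := fun i => uv i / Real.sqrt (d i) with ha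
  -- μv = uv ⬝ᵥ MD.mulVec uv
  have hmu : μv = uv ⬝ᵥ MD.mulVec uv := by
    rw [heig, dotProduct_smul, smul_eq_mul, hnorm, mul_one]
  -- split MD
  have hsplit : uv ⬝ᵥ MD.mulVec uv
      = (∑ i, ∑ j, W i j * a i * a j) - (∑ i, Real.sqrt (d i) * uv i) ^ 2 := by
    rw [hMD, Matrix.sub_mulVec, dotProduct_sub]
    congr 1
    · simp only [Matrix.mulVec, dotProduct, Matrix.of_apply]
      congr 1; funext i
      rw [Finset.mul_sum]
      congr 1; funext j
      rw [ha]
      field_simp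
    · simp only [Matrix.mulVec, dotProduct, vecMulVec_apply]
      rw [sq, Finset.sum_mul]
      congr 1; funext i
      rw [Finset.mul_sum, Finset.mul_sum]
      congr 1; funext j
      ring
  -- bound quadratic form
  have hda : ∀ i, d i * a i ^ 2 = uv i ^ 2 := by
    intro i; rw [ha]
    simp only
    rw [div_pow, Real.sq_sqrt (hdpos i).le, mul_div_cancel₀ _ (ne_of_gt (hdpos i))]
  have huvsq : ∑ i, uv i ^ 2 = 1 := by
    rw [← hnorm]; simp [dotProduct, sq]
  have hQ : |∑ i, ∑ j, W i j * a i * a j| ≤ 1 := by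
    have hb : ∀ i j, |W i j * a i * a j| ≤ W i j * (a i ^ 2 + a j ^ 2) / 2 := by
      intro i j
      rw [abs_mul, abs_mul, abs_of_nonneg (hW0 i j)]
      have h1 : |a i| * |a j| ≤ (a i ^ 2 + a j ^ 2) / 2 := by
        nlinarith [sq_nonneg (|a i| - |a j|), sq_abs (a i), sq_abs (a j)]
      calc W i j * |a i| * |a j| = W i j * (|a i| * |a j|) := by ring
        _ ≤ W i j * ((a i ^ 2 + a j ^ 2) / 2) :=
            mul_le_mul_of_nonneg_left h1 (hW0 i j)
        _ = W i j * (a i ^ 2 + a j ^ 2) / 2 := by ring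
    calc |∑ i, ∑ j, W i j * a i * a j| ≤ ∑ i, |∑ j, W i j * a i * a j| :=
          Finset.abs_sum_le_sum_abs _ _
      _ ≤ ∑ i, ∑ j, |W i j * a i * a j| :=
          Finset.sum_le_sum fun i _ => Finset.abs_sum_le_sum_abs _ _
      _ ≤ ∑ i, ∑ j, W i j * (a i ^ 2 + a j ^ 2) / 2 :=
          Finset.sum_le_sum fun i _ => Finset.sum_le_sum fun j _ => hb i j
      _ = ((∑ i, ∑ j, W i j * a i ^ 2) + ∑ i, ∑ j, W i j * a j ^ 2) / 2 := by
          have hstep : ∀ i : Fin n, ∑ j, W i j * (a i ^ 2 + a j ^ 2) / 2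
              = ((∑ j, W i j * a i ^ 2) + ∑ j, W i j * a j ^ 2) / 2 := by
            intro i
            rw [← Finset.sum_add_distrib, Finset.sum_div]
            congr 1; funext j; ring
          rw [Finset.sum_congr rfl fun i _ => hstep i, ← Finset.sum_div,
            Finset.sum_add_distrib]
      _ = 1 := by
          have e1 : ∑ i, ∑ j, W i j * a i ^ 2 = ∑ i : Fin n, d i * a i ^ 2 := by
            congr 1; funext i
            rw [← Finset.sum_mul, ← hd i]
          have e2 : ∑ i, ∑ j, W i j * a j ^ 2 = ∑ j : Fin n, d j * a j ^ 2 := by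
            rw [Finset.sum_comm]
            congr 1; funext j
            have : ∀ i, W i j = W j i := fun i => by
              have := congrFun (congrFun hsym j) i
              simpa [Matrix.transpose_apply] using this
            rw [Finset.sum_congr rfl fun i _ => by rw [this i]]
            rw [← Finset.sum_mul, ← hd j]
          rw [e1, e2]
          have : ∑ i : Fin n, d i * a i ^ 2 = 1 := by
            rw [Finset.sum_congr rfl fun i _ => hda i, huvsq]
          rw [this]; norm_num
  have hV : (∑ i, Real.sqrt (d i) * uv i) ^ 2 ≤ 1 := by
    have := Finset.sum_mul_sq_le_sq_mul_sq Finset.univ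
      (fun i => Real.sqrt (d i)) uv
    have e : ∑ i : Fin n, Real.sqrt (d i) ^ 2 = 1 := by
      rw [Finset.sum_congr rfl fun i _ => by rw [sq, hsq i], hdsum]
    rw [e, one_mul] at this
    calc (∑ i, Real.sqrt (d i) * uv i) ^ 2 ≤ ∑ i, uv i ^ 2 := this
      _ = 1 := huvsq
  rw [hmu, hsplit]
  rw [abs_le]
  constructor
  · have := neg_abs_le (∑ i, ∑ j, W i j * a i * a j)
    nlinarith [sq_nonneg (∑ i, Real.sqrt (d i) * uv i)]
  · have := le_abs_self (∑ i, ∑ j, W i j * a i * a j)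
    nlinarith [sq_nonneg (∑ i, Real.sqrt (d i) * uv i)]

set_option maxHeartbeats 3200000 in
/-- intra_cluster_homogeneity -/
theorem intra_cluster_homogeneity (k : ℕ) (hk : 2 ≤ k) (c1 c2 K : ℝ)
    (hc1 : 0 < c1) (hc2 : 0 < c2) (hK : 0 < K) :
    -- the constant C is independent of n (and of the graph)
    ∃ C : ℝ, 0 < C ∧
      ∀ (n : ℕ) (hkn : k ≤ n) (W : Matrix (Fin n) (Fin n) ℝ),
        W.IsSymm → (∀ i j, 0 ≤ W i j) →
        ∀ (d : Fin n → ℝ), (∀ i, d i = ∑ j, W i j) → (∀ i, 0 < d i) →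
        (∑ i, d i) = 1 →
        -- no dominant vertices: d_i = Θ(1/n)
        (∀ i, c1 / n ≤ d i ∧ d i ≤ c2 / n) →
        ∀ (MD : Matrix (Fin n) (Fin n) ℝ),
          MD = (Matrix.of fun i j => W i j / (Real.sqrt (d i) * Real.sqrt (d j)))
            - vecMulVec (fun i => Real.sqrt (d i)) (fun i => Real.sqrt (d i)) →
        -- eigenvalues of M_D in decreasing absolute value, orthonormal eigenvectors
        ∀ (μ : Fin n → ℝ) (u : Fin n → Fin n → ℝ),
          (∀ i, MD.mulVec (u i) = μ i • u i) →
          (∀ i j, (u i) ⬝ᵥ (u j) = if i = j then 1 else 0) →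
          (∀ i j : Fin n, i ≤ j → |μ j| ≤ |μ i|) →
        -- spectral gap: |μ_{k-1}| > ε ≥ |μ_k|
        ∀ ε : ℝ, 0 ≤ ε →
          (∀ i : Fin n, (i : ℕ) < k - 1 → ε < |μ i|) →
          (∀ i : Fin n, k - 1 ≤ (i : ℕ) → |μ i| ≤ ε) →
        -- optimal vertex representatives: rows of X* = (D^{-1/2}u_1,…,D^{-1/2}u_{k-1})
        ∀ (r : Fin n → Fin (k - 1) → ℝ),
          (∀ j a, r j a =
            u (Fin.castLE (le_trans (Nat.sub_le k 1) hkn) a) j / Real.sqrt (d j)) →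
        -- weighted k-variance of the representatives for a partition P'
        ∀ (SV : (Fin n → Fin k) → ℝ),
          (∀ P' : Fin n → Fin k, SV P' = ∑ a : Fin k,
            ∑ j ∈ Finset.univ.filter (fun j => P' j = a), d j *
              ∑ b : Fin (k - 1),
                (r j b -
                  (∑ l ∈ Finset.univ.filter (fun l => P' l = a), d l * r l b) /
                    (∑ l ∈ Finset.univ.filter (fun l => P' l = a), d l)) ^ 2) →
        -- P minimizes the weighted k-variance, clusters of size ≥ Kn
        ∀ P : Fin n → Fin k,
          (∀ P' : Fin n → Fin k, SV P ≤ SV P') →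
          (∀ a : Fin k,
            K * n ≤ ((Finset.univ.filter (fun j => P j = a)).card : ℝ)) →
        ∀ s : ℝ, s = Real.sqrt (SV P) →
        -- conclusion: intra-cluster homogeneity for each cluster
        ∀ a : Fin k,
        ∀ X Y : Finset (Fin n), (∀ x ∈ X, P x = a) → (∀ y ∈ Y, P y = a) →
          |(∑ i ∈ X, ∑ j ∈ Y, W i j) -
            ((∑ i ∈ Finset.univ.filter (fun i => P i = a),
                ∑ j ∈ Finset.univ.filter (fun j => P j = a), W i j) /
              (∑ i ∈ Finset.univ.filter (fun i => P i = a), d i) ^ 2) *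
            (∑ i ∈ X, d i) * (∑ j ∈ Y, d j)| ≤
          C * (Real.sqrt (2 * k) * s + ε) *
            (∑ i ∈ Finset.univ.filter (fun i => P i = a), d i) := by
  classical
  have hKc1 : 0 < K * c1 := mul_pos hK hc1
  set β := Real.sqrt (K * c1) with hβ
  have hβpos : 0 < β := Real.sqrt_pos.mpr hKc1
  refine ⟨(4 / β + 2) / (K * c1), by positivity, ?_⟩
  intro n hkn W hsym hW0 d hd hdpos hdsum hdrange MD hMD μ u heig hu hμmono ε hε
    hgap1 hgap2 r hr SV hSV P hoptP hsize s hs a X Y hXa hYa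
  have hn : 0 < n := lt_of_lt_of_le (by omega) hkn
  have hk1n : k - 1 ≤ n := le_trans (Nat.sub_le k 1) hkn
  set V : Finset (Fin n) := Finset.univ.filter (fun i => P i = a) with hV
  have hXV : X ⊆ V := fun x hx => by
    rw [hV]; exact Finset.mem_filter.mpr ⟨Finset.mem_univ x, hXa x hx⟩
  have hYV : Y ⊆ V := fun y hy => by
    rw [hV]; exact Finset.mem_filter.mpr ⟨Finset.mem_univ y, hYa y hy⟩
  -- volumes
  have hvol0 : ∀ Z : Finset (Fin n), 0 ≤ ∑ i ∈ Z, d i :=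
    fun Z => Finset.sum_nonneg fun i _ => (hdpos i).le
  have hvol1 : ∀ Z : Finset (Fin n), ∑ i ∈ Z, d i ≤ 1 := by
    intro Z
    rw [← hdsum]
    exact Finset.sum_le_sum_of_subset_of_nonneg (Finset.subset_univ Z)
      (fun i _ _ => (hdpos i).le)
  have hvolmono : ∀ Z₁ Z₂ : Finset (Fin n), Z₁ ⊆ Z₂ →
      ∑ i ∈ Z₁, d i ≤ ∑ i ∈ Z₂, d i := fun Z₁ Z₂ h =>
    Finset.sum_le_sum_of_subset_of_nonneg h (fun i _ _ => (hdpos i).le)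
  have hvolV : K * c1 ≤ ∑ i ∈ V, d i := by
    calc K * c1 = (K * n) * (c1 / n) := by
          field_simp
        _ ≤ (V.card : ℝ) * (c1 / n) := by
          apply mul_le_mul_of_nonneg_right (hsize a)
          positivity
        _ ≤ ∑ i ∈ V, d i := by
          have hc : (V.card : ℝ) * (c1 / n) = ∑ _i ∈ V, (c1 / n) := by
            rw [Finset.sum_const, nsmul_eq_mul]
          rw [hc]
          exact Finset.sum_le_sum fun i _ => (hdrange i).1
  have hvolVpos : 0 < ∑ i ∈ V, d i := lt_of_lt_of_le hKc1 hvolV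
  have hvolVne : (∑ i ∈ V, d i) ≠ 0 := ne_of_gt hvolVpos
  -- characteristic vectors and coefficients
  set χ : Finset (Fin n) → Fin n → ℝ :=
    fun Z i => if i ∈ Z then Real.sqrt (d i) else 0 with hχ
  set A : Fin n → Finset (Fin n) → ℝ := fun i Z => u i ⬝ᵥ χ Z with hA
  have hsq : ∀ i, Real.sqrt (d i) * Real.sqrt (d i) = d i :=
    fun i => Real.mul_self_sqrt (hdpos i).le
  have hsne : ∀ i, Real.sqrt (d i) ≠ 0 :=
    fun i => ne_of_gt (Real.sqrt_pos.mpr (hdpos i))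
  -- Parseval for characteristic vectors
  have hχχ : ∀ Z : Finset (Fin n), χ Z ⬝ᵥ χ Z = ∑ i ∈ Z, d i := by
    intro Z
    rw [dotProduct]
    rw [Finset.sum_congr rfl (fun i _ => show χ Z i * χ Z i
      = if i ∈ Z then d i else 0 by
        rw [hχ]; by_cases h : i ∈ Z <;> simp [h, hsq i])]
    rw [Finset.sum_ite_mem, Finset.univ_inter]
  have hAsq : ∀ Z : Finset (Fin n), ∑ i, (A i Z) ^ 2 = ∑ i ∈ Z, d i := by
    intro Z
    rw [hA]
    simp only
    rw [ICH.parseval u hu (χ Z), hχχ]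
  -- the spectral decomposition of cut weights
  have hG : ∀ Z₁ Z₂ : Finset (Fin n),
      ∑ i, μ i * A i Z₁ * A i Z₂
        = (∑ i ∈ Z₁, ∑ j ∈ Z₂, W i j) - (∑ i ∈ Z₁, d i) * (∑ j ∈ Z₂, d j) := by
    intro Z₁ Z₂
    have h1 : ∑ i, μ i * A i Z₁ * A i Z₂ = χ Z₁ ⬝ᵥ MD.mulVec (χ Z₂) :=
      (ICH.bilinear_expand MD μ u heig hu (χ Z₁) (χ Z₂)).symm
    rw [h1, hMD, Matrix.sub_mulVec, dotProduct_sub]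
    congr 1
    · simp only [Matrix.mulVec, dotProduct, Matrix.of_apply]
      have hterm : ∀ i, χ Z₁ i * ∑ j, W i j / (Real.sqrt (d i) * Real.sqrt (d j)) * χ Z₂ j
          = if i ∈ Z₁ then ∑ j, (if j ∈ Z₂ then W i j else 0) else 0 := by
        intro i
        rw [hχ]
        simp only
        split_ifs with h
        · rw [Finset.mul_sum]
          congr 1; funext j
          split_ifs with h2
          · field_simp
            rw [div_eq_iff (mul_ne_zero (hsne i) (hsne j))]
            ring
          · ring
        · ring
      rw [Finset.sum_congr rfl fun i _ => hterm i, Finset.sum_ite_mem,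
        Finset.univ_inter]
      congr 1; funext i
      rw [Finset.sum_ite_mem, Finset.univ_inter]
    · simp only [Matrix.mulVec, dotProduct, vecMulVec_apply]
      have hvZ : ∀ Z : Finset (Fin n),
          ∑ j, Real.sqrt (d j) * χ Z j = ∑ j ∈ Z, d j := by
        intro Z
        rw [Finset.sum_congr rfl (fun j _ => show Real.sqrt (d j) * χ Z j
          = if j ∈ Z then d j else 0 by
            rw [hχ]; by_cases h : j ∈ Z <;> simp [h, hsq j])]
        rw [Finset.sum_ite_mem, Finset.univ_inter]
      have hterm : ∀ i, χ Z₁ i * ∑ j, Real.sqrt (d i) * Real.sqrt (d j) * χ Z₂ j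
          = (if i ∈ Z₁ then d i else 0) * ∑ j ∈ Z₂, d j := by
        intro i
        have hinner : ∑ j, Real.sqrt (d i) * Real.sqrt (d j) * χ Z₂ j
            = Real.sqrt (d i) * ∑ j ∈ Z₂, d j := by
          rw [← hvZ Z₂, Finset.mul_sum]
          congr 1; funext j; ring
        rw [hinner, hχ]
        simp only
        by_cases h : i ∈ Z₁
        · simp only [if_pos h]
          rw [← mul_assoc, hsq i]
        · simp only [if_neg h]
          ring
      rw [Finset.sum_congr rfl fun i _ => hterm i, ← Finset.sum_mul,
        Finset.sum_ite_mem, Finset.univ_inter]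
  -- |μ i| ≤ 2
  have hμ2 : ∀ i, |μ i| ≤ 2 := by
    intro i
    refine ICH.mu_bound W hsym hW0 d hd hdpos hdsum MD hMD (μ i) (u i) (heig i) ?_
    simpa using hu i i
  set vX := ∑ i ∈ X, d i with hvX
  set vY := ∑ i ∈ Y, d i with hvY
  set vV := ∑ i ∈ V, d i with hvVdef
  set t := vX * vY / vV ^ 2 with ht
  have ht0 : 0 ≤ t := by
    rw [ht]
    exact div_nonneg (mul_nonneg (hvol0 X) (hvol0 Y)) (sq_nonneg _)
  have ht1 : t ≤ 1 := by
    rw [ht, div_le_one (by positivity)]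
    rw [sq]
    exact mul_le_mul (hvolmono X V hXV) (hvolmono Y V hYV) (hvol0 Y) (hvol0 V)
  -- reduce the goal to the spectral sums
  have hgoal : (∑ i ∈ X, ∑ j ∈ Y, W i j)
      - ((∑ i ∈ V, ∑ j ∈ V, W i j) / vV ^ 2) * vX * vY
      = (∑ i, μ i * A i X * A i Y) - t * (∑ i, μ i * A i V * A i V) := by
    have e1 : (∑ i ∈ X, ∑ j ∈ Y, W i j)
        = (∑ i, μ i * A i X * A i Y) + vX * vY := by
      have := hG X Y; linarith
    have e2 : (∑ i ∈ V, ∑ j ∈ V, W i j)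
        = (∑ i, μ i * A i V * A i V) + vV * vV := by
      have := hG V V; linarith
    rw [e1, e2, ht]
    field_simp
    ring
  rw [hgoal]
  -- the summand
  set T : Fin n → ℝ :=
    fun i => μ i * A i X * A i Y - t * (μ i * A i V * A i V) with hT
  have hTsum : (∑ i, μ i * A i X * A i Y) - t * (∑ i, μ i * A i V * A i V)
      = ∑ i, T i := by
    rw [Finset.mul_sum, ← Finset.sum_sub_distrib]
  rw [hTsum]
  have hsplit := Finset.sum_filter_add_sum_filter_not Finset.univ
    (fun i : Fin n => (i : ℕ) < k - 1) T
  rw [← hsplit]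
  -- bound on products of coefficients
  have hAA : ∀ (S : Finset (Fin n)) (Z₁ Z₂ : Finset (Fin n)),
      ∑ i ∈ S, |A i Z₁| * |A i Z₂| ≤ 1 := by
    intro S Z₁ Z₂
    have h1 := Real.sum_mul_le_sqrt_mul_sqrt S (fun i => |A i Z₁|) (fun i => |A i Z₂|)
    simp only [sq_abs] at h1
    have hZ : ∀ Z : Finset (Fin n), ∑ i ∈ S, (A i Z) ^ 2 ≤ 1 := by
      intro Z
      calc ∑ i ∈ S, (A i Z) ^ 2 ≤ ∑ i, (A i Z) ^ 2 :=
            Finset.sum_le_sum_of_subset_of_nonneg (Finset.subset_univ S)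
              (fun i _ _ => sq_nonneg _)
        _ = ∑ i ∈ Z, d i := hAsq Z
        _ ≤ 1 := hvol1 Z
    calc ∑ i ∈ S, |A i Z₁| * |A i Z₂|
        ≤ Real.sqrt (∑ i ∈ S, (A i Z₁) ^ 2) * Real.sqrt (∑ i ∈ S, (A i Z₂) ^ 2) := h1
      _ ≤ 1 * 1 := by
          apply mul_le_mul (Real.sqrt_le_one.mpr (hZ Z₁)) (Real.sqrt_le_one.mpr (hZ Z₂))
            (Real.sqrt_nonneg _) (by norm_num)
      _ = 1 := by norm_num
  -- small eigenvalues: bound by ε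
  have hS2 : |∑ i ∈ Finset.univ.filter (fun i : Fin n => ¬ (i : ℕ) < k - 1), T i|
      ≤ 2 * ε := by
    set S2 := Finset.univ.filter (fun i : Fin n => ¬ (i : ℕ) < k - 1) with hS2def
    calc |∑ i ∈ S2, T i| ≤ ∑ i ∈ S2, |T i| := Finset.abs_sum_le_sum_abs _ _
      _ ≤ ∑ i ∈ S2, ε * (|A i X| * |A i Y| + t * (A i V) ^ 2) := by
          apply Finset.sum_le_sum
          intro i hi
          have hki : k - 1 ≤ (i : ℕ) := by
            have := (Finset.mem_filter.mp hi).2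
            omega
          have hμi := hgap2 i hki
          have habs : |T i| ≤ |μ i| * (|A i X| * |A i Y| + t * (A i V) ^ 2) := by
            rw [hT]
            simp only
            calc |μ i * A i X * A i Y - t * (μ i * A i V * A i V)|
                ≤ |μ i * A i X * A i Y| + |t * (μ i * A i V * A i V)| := abs_sub _ _
              _ = |μ i| * (|A i X| * |A i Y|) + t * (|μ i| * (A i V) ^ 2) := by
                  rw [abs_mul, abs_mul, abs_mul, abs_mul, abs_mul,
                    abs_of_nonneg ht0, ← sq_abs (A i V)]
                  ring
              _ = |μ i| * (|A i X| * |A i Y| + t * (A i V) ^ 2) := by ring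
          refine le_trans habs ?_
          apply mul_le_mul_of_nonneg_right hμi
          have : 0 ≤ t * (A i V) ^ 2 := mul_nonneg ht0 (sq_nonneg _)
          positivity
      _ = ε * ∑ i ∈ S2, (|A i X| * |A i Y| + t * (A i V) ^ 2) := by
          rw [Finset.mul_sum]
      _ ≤ ε * 2 := by
          apply mul_le_mul_of_nonneg_left _ hε
          rw [Finset.sum_add_distrib]
          have h1 : ∑ i ∈ S2, |A i X| * |A i Y| ≤ 1 := hAA S2 X Y
          have h2 : ∑ i ∈ S2, t * (A i V) ^ 2 ≤ 1 := by
            rw [← Finset.mul_sum]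
            calc t * ∑ i ∈ S2, (A i V) ^ 2 ≤ 1 * 1 := by
                  apply mul_le_mul ht1 _ (Finset.sum_nonneg fun i _ => sq_nonneg _)
                    (by norm_num)
                  calc ∑ i ∈ S2, (A i V) ^ 2 ≤ ∑ i, (A i V) ^ 2 :=
                        Finset.sum_le_sum_of_subset_of_nonneg (Finset.subset_univ S2)
                          (fun i _ _ => sq_nonneg _)
                    _ = vV := hAsq V
                    _ ≤ 1 := hvol1 V
              _ = 1 := by norm_num
          linarith
      _ = 2 * ε := by ring
  -- large eigenvalues
  have hs0 : 0 ≤ s := by rw [hs]; exact Real.sqrt_nonneg _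
  have hSVP0 : 0 ≤ SV P := by
    rw [hSV P]
    apply Finset.sum_nonneg
    intro a' _
    apply Finset.sum_nonneg
    intro j _
    exact mul_nonneg (hdpos j).le (Finset.sum_nonneg fun b _ => sq_nonneg _)
  have hssq : s ^ 2 = SV P := by rw [hs, Real.sq_sqrt hSVP0]
  have hbig : |∑ i ∈ Finset.univ.filter (fun i : Fin n => (i : ℕ) < k - 1), T i|
      ≤ (4 / β + 2) * Real.sqrt ((k - 1 : ℕ) : ℝ) * s := by
    rw [ICH.sum_small hk1n T]
    set c : Fin (k - 1) → ℝ := fun b => A (Fin.castLE hk1n b) V / vV with hcdef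
    have hur : ∀ (b : Fin (k - 1)) (x : Fin n),
        u (Fin.castLE hk1n b) x = Real.sqrt (d x) * r x b := by
      intro b x
      rw [hr x b]
      rw [mul_div_cancel₀ _ (hsne x)]
    have hAr : ∀ (b : Fin (k - 1)) (Z : Finset (Fin n)),
        A (Fin.castLE hk1n b) Z = ∑ x ∈ Z, d x * r x b := by
      intro b Z
      rw [hA]
      simp only [dotProduct, hχ]
      rw [Finset.sum_congr rfl (fun x _ => show u (Fin.castLE hk1n b) x *
          (if x ∈ Z then Real.sqrt (d x) else 0) = if x ∈ Z then d x * r x b else 0 by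
        by_cases h : x ∈ Z
        · simp only [if_pos h]
          rw [hur b x]
          rw [show Real.sqrt (d x) * r x b * Real.sqrt (d x)
            = (Real.sqrt (d x) * Real.sqrt (d x)) * r x b by ring, hsq x]
        · simp [h])]
      rw [Finset.sum_ite_mem, Finset.univ_inter]
    have hAV : ∀ b, A (Fin.castLE hk1n b) V = c b * vV := by
      intro b
      rw [hcdef]
      simp only
      rw [div_mul_cancel₀ _ hvolVne]
    have hcV : ∀ b, c b = (∑ x ∈ V, d x * r x b) / vV := by
      intro b
      rw [hcdef]
      simp only
      rw [hAr b V]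
    set q : Fin (k - 1) → ℝ := fun b => ∑ x ∈ V, d x * (r x b - c b) ^ 2 with hqdef
    have hq0 : ∀ b, 0 ≤ q b := by
      intro b
      exact Finset.sum_nonneg fun x _ => mul_nonneg (hdpos x).le (sq_nonneg _)
    -- deviation bound
    have hE : ∀ (b : Fin (k - 1)) (Z : Finset (Fin n)), Z ⊆ V →
        |A (Fin.castLE hk1n b) Z - c b * (∑ i ∈ Z, d i)| ≤ Real.sqrt (q b) := by
      intro b Z hZ
      have e : A (Fin.castLE hk1n b) Z - c b * (∑ i ∈ Z, d i)
          = ∑ x ∈ Z, Real.sqrt (d x) * (Real.sqrt (d x) * (r x b - c b)) := by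
        rw [hAr b Z, Finset.mul_sum, ← Finset.sum_sub_distrib]
        congr 1; funext x
        rw [show Real.sqrt (d x) * (Real.sqrt (d x) * (r x b - c b))
          = (Real.sqrt (d x) * Real.sqrt (d x)) * (r x b - c b) by ring, hsq x]
        ring
      rw [e]
      have h1 := ICH.abs_inner_le Z (fun x => Real.sqrt (d x))
        (fun x => Real.sqrt (d x) * (r x b - c b))
      have e1 : ∑ x ∈ Z, (Real.sqrt (d x)) ^ 2 = ∑ x ∈ Z, d x :=
        Finset.sum_congr rfl fun x _ => Real.sq_sqrt (hdpos x).le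
      have e2 : ∑ x ∈ Z, (Real.sqrt (d x) * (r x b - c b)) ^ 2
          = ∑ x ∈ Z, d x * (r x b - c b) ^ 2 := by
        apply Finset.sum_congr rfl
        intro x _
        rw [mul_pow, Real.sq_sqrt (hdpos x).le]
      rw [e1, e2] at h1
      refine le_trans h1 ?_
      calc Real.sqrt (∑ x ∈ Z, d x) * Real.sqrt (∑ x ∈ Z, d x * (r x b - c b) ^ 2)
          ≤ 1 * Real.sqrt (q b) := by
            apply mul_le_mul (Real.sqrt_le_one.mpr (hvol1 Z))
              _ (Real.sqrt_nonneg _) (by norm_num)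
            apply Real.sqrt_le_sqrt
            rw [hqdef]
            exact Finset.sum_le_sum_of_subset_of_nonneg hZ
              (fun x _ _ => mul_nonneg (hdpos x).le (sq_nonneg _))
        _ = Real.sqrt (q b) := by rw [one_mul]
    -- centroid bound
    have hcb : ∀ b, |c b| ≤ 1 / β := by
      intro b
      have h1 : (A (Fin.castLE hk1n b) V) ^ 2 ≤ vV := by
        calc (A (Fin.castLE hk1n b) V) ^ 2 ≤ ∑ i, (A i V) ^ 2 :=
              Finset.single_le_sum (fun i _ => sq_nonneg (A i V))
                (Finset.mem_univ _)
          _ = vV := hAsq V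
      have h2 : (c b) ^ 2 ≤ 1 / (K * c1) := by
        rw [hcdef]
        simp only
        rw [div_pow]
        calc (A (Fin.castLE hk1n b) V) ^ 2 / vV ^ 2 ≤ vV / vV ^ 2 :=
              (div_le_div_iff_of_pos_right (pow_pos hvolVpos 2)).mpr h1
          _ = 1 / vV := by rw [sq]; field_simp
          _ ≤ 1 / (K * c1) := one_div_le_one_div_of_le hKc1 hvolV
      have h3 := Real.sqrt_le_sqrt h2
      rw [Real.sqrt_sq_eq_abs] at h3
      refine le_trans h3 ?_
      rw [one_div, Real.sqrt_inv, hβ, one_div]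
    -- q b ≤ 1
    have hq1 : ∀ b, q b ≤ 1 := by
      intro b
      have hmm := ICH.mean_min V d (fun x => r x b) hvolVpos
      have e : q b = ∑ x ∈ V, d x *
          (r x b - (∑ x ∈ V, d x * r x b) / (∑ x ∈ V, d x)) ^ 2 := by
        rw [hqdef]
        simp only
        rw [hcV b, hvVdef]
      rw [e]
      refine le_trans hmm ?_
      calc ∑ x ∈ V, d x * (r x b) ^ 2 ≤ ∑ x, d x * (r x b) ^ 2 :=
            Finset.sum_le_sum_of_subset_of_nonneg (Finset.subset_univ V)
              (fun x _ _ => mul_nonneg (hdpos x).le (sq_nonneg _))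
        _ = ∑ x, (u (Fin.castLE hk1n b) x) ^ 2 := by
            apply Finset.sum_congr rfl
            intro x _
            rw [hur b x, mul_pow, Real.sq_sqrt (hdpos x).le]
        _ = 1 := by
            have h4 := hu (Fin.castLE hk1n b) (Fin.castLE hk1n b)
            simp [dotProduct] at h4
            rw [← h4]
            apply Finset.sum_congr rfl
            intro x _
            rw [sq]
    -- sum of q bounded by s²
    have hcVraw : ∀ b, c b = (∑ x ∈ V, d x * r x b) / (∑ x ∈ V, d x) := by
      intro b
      rw [hcV b, hvVdef]
    have hQs : ∑ b, q b ≤ s ^ 2 := by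
      rw [hssq, hSV P]
      have hterm : (∑ j ∈ Finset.univ.filter (fun j => P j = a), d j *
          ∑ b : Fin (k - 1),
            (r j b - (∑ l ∈ Finset.univ.filter (fun l => P l = a), d l * r l b) /
              (∑ l ∈ Finset.univ.filter (fun l => P l = a), d l)) ^ 2)
          = ∑ b, q b := by
        rw [← hV]
        have e1 : ∀ j, d j * ∑ b : Fin (k - 1),
            (r j b - (∑ l ∈ V, d l * r l b) / (∑ l ∈ V, d l)) ^ 2
            = ∑ b : Fin (k - 1), d j * (r j b - c b) ^ 2 := by
          intro j
          rw [Finset.mul_sum]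
          apply Finset.sum_congr rfl
          intro b _
          rw [← hcVraw b]
        rw [Finset.sum_congr rfl fun j _ => e1 j, Finset.sum_comm]
      calc ∑ b, q b
          = ∑ j ∈ Finset.univ.filter (fun j => P j = a), d j *
              ∑ b : Fin (k - 1),
                (r j b - (∑ l ∈ Finset.univ.filter (fun l => P l = a), d l * r l b) /
                  (∑ l ∈ Finset.univ.filter (fun l => P l = a), d l)) ^ 2 := hterm.symm
        _ ≤ ∑ a' : Fin k, ∑ j ∈ Finset.univ.filter (fun j => P j = a'), d j *
              ∑ b : Fin (k - 1),
                (r j b - (∑ l ∈ Finset.univ.filter (fun l => P l = a'), d l * r l b) /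
                  (∑ l ∈ Finset.univ.filter (fun l => P l = a'), d l)) ^ 2 := by
            apply Finset.single_le_sum (f := fun a' : Fin k =>
              ∑ j ∈ Finset.univ.filter (fun j => P j = a'), d j *
              ∑ b : Fin (k - 1),
                (r j b - (∑ l ∈ Finset.univ.filter (fun l => P l = a'), d l * r l b) /
                  (∑ l ∈ Finset.univ.filter (fun l => P l = a'), d l)) ^ 2)
              _ (Finset.mem_univ a)
            intro a' _
            exact Finset.sum_nonneg fun j _ => mul_nonneg (hdpos j).le
              (Finset.sum_nonneg fun b _ => sq_nonneg _)
    have hQ0 : 0 ≤ ∑ b, q b := Finset.sum_nonneg fun b _ => hq0 b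
    have hsqQ : Real.sqrt (∑ b, q b) ≤ s := by
      have h5 := Real.sqrt_le_sqrt hQs
      rwa [Real.sqrt_sq hs0] at h5
    have hQk : (∑ b, q b) ≤ ((k - 1 : ℕ) : ℝ) := by
      calc ∑ b, q b ≤ ∑ _b : Fin (k - 1), (1 : ℝ) :=
            Finset.sum_le_sum fun b _ => hq1 b
        _ = ((k - 1 : ℕ) : ℝ) := by simp
    have hsumsqrtq : ∑ b, Real.sqrt (q b) ≤ Real.sqrt ((k - 1 : ℕ) : ℝ) * s := by
      have h1 := Real.sum_mul_le_sqrt_mul_sqrt Finset.univ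
        (fun _ : Fin (k - 1) => (1 : ℝ)) (fun b => Real.sqrt (q b))
      simp only [one_mul, one_pow] at h1
      have e1 : ∑ _b : Fin (k - 1), (1 : ℝ) = ((k - 1 : ℕ) : ℝ) := by simp
      have e2 : ∑ b, (Real.sqrt (q b)) ^ 2 = ∑ b, q b :=
        Finset.sum_congr rfl fun b _ => Real.sq_sqrt (hq0 b)
      rw [e1, e2] at h1
      refine le_trans h1 ?_
      exact mul_le_mul_of_nonneg_left hsqQ (Real.sqrt_nonneg _)
    have hQle : ∑ b, q b ≤ Real.sqrt ((k - 1 : ℕ) : ℝ) * s := by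
      calc ∑ b, q b = Real.sqrt (∑ b, q b) * Real.sqrt (∑ b, q b) :=
            (Real.mul_self_sqrt hQ0).symm
        _ ≤ Real.sqrt ((k - 1 : ℕ) : ℝ) * s := by
            apply mul_le_mul _ hsqQ (Real.sqrt_nonneg _) (Real.sqrt_nonneg _)
            exact Real.sqrt_le_sqrt hQk
    -- per-index bound
    have hmain : ∀ b : Fin (k - 1), |T (Fin.castLE hk1n b)|
        ≤ 4 / β * Real.sqrt (q b) + 2 * q b := by
      intro b
      have hiden : A (Fin.castLE hk1n b) X * A (Fin.castLE hk1n b) Y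
          - t * (A (Fin.castLE hk1n b) V * A (Fin.castLE hk1n b) V)
          = c b * vX * (A (Fin.castLE hk1n b) Y - c b * vY)
            + c b * vY * (A (Fin.castLE hk1n b) X - c b * vX)
            + (A (Fin.castLE hk1n b) X - c b * vX) * (A (Fin.castLE hk1n b) Y - c b * vY) := by
        rw [hAV b, ht]
        field_simp [hvolVne]
        ring
      have hTi : T (Fin.castLE hk1n b) = μ (Fin.castLE hk1n b) *
          (c b * vX * (A (Fin.castLE hk1n b) Y - c b * vY)
            + c b * vY * (A (Fin.castLE hk1n b) X - c b * vX)
            + (A (Fin.castLE hk1n b) X - c b * vX) * (A (Fin.castLE hk1n b) Y - c b * vY)) := by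
        rw [hT]
        simp only
        rw [← hiden]
        ring
      rw [hTi, abs_mul]
      have hEX := hE b X hXV
      have hEY := hE b Y hYV
      have hcbb := hcb b
      have hvX0 : 0 ≤ vX := hvol0 X
      have hvX1 : vX ≤ 1 := hvol1 X
      have hvY0 : 0 ≤ vY := hvol0 Y
      have hvY1 : vY ≤ 1 := hvol1 Y
      have hsqq0 : 0 ≤ Real.sqrt (q b) := Real.sqrt_nonneg _
      have hβinv : 0 ≤ 1 / β := by positivity
      have h1 : |c b * vX * (A (Fin.castLE hk1n b) Y - c b * vY)|
          ≤ 1 / β * Real.sqrt (q b) := by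
        rw [abs_mul, abs_mul]
        calc |c b| * |vX| * |A (Fin.castLE hk1n b) Y - c b * vY|
            ≤ (1 / β * 1) * Real.sqrt (q b) := by
              apply mul_le_mul _ hEY (abs_nonneg _) (by positivity)
              apply mul_le_mul hcbb _ (abs_nonneg _) hβinv
              rw [abs_of_nonneg hvX0]; exact hvX1
          _ = 1 / β * Real.sqrt (q b) := by ring
      have h2 : |c b * vY * (A (Fin.castLE hk1n b) X - c b * vX)|
          ≤ 1 / β * Real.sqrt (q b) := by
        rw [abs_mul, abs_mul]
        calc |c b| * |vY| * |A (Fin.castLE hk1n b) X - c b * vX|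
            ≤ (1 / β * 1) * Real.sqrt (q b) := by
              apply mul_le_mul _ hEX (abs_nonneg _) (by positivity)
              apply mul_le_mul hcbb _ (abs_nonneg _) hβinv
              rw [abs_of_nonneg hvY0]; exact hvY1
          _ = 1 / β * Real.sqrt (q b) := by ring
      have h3 : |(A (Fin.castLE hk1n b) X - c b * vX) *
          (A (Fin.castLE hk1n b) Y - c b * vY)| ≤ q b := by
        rw [abs_mul]
        calc |A (Fin.castLE hk1n b) X - c b * vX| * |A (Fin.castLE hk1n b) Y - c b * vY|
            ≤ Real.sqrt (q b) * Real.sqrt (q b) :=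
              mul_le_mul hEX hEY (abs_nonneg _) hsqq0
          _ = q b := Real.mul_self_sqrt (hq0 b)
      have htri : |c b * vX * (A (Fin.castLE hk1n b) Y - c b * vY)
            + c b * vY * (A (Fin.castLE hk1n b) X - c b * vX)
            + (A (Fin.castLE hk1n b) X - c b * vX) * (A (Fin.castLE hk1n b) Y - c b * vY)|
          ≤ 1 / β * Real.sqrt (q b) + 1 / β * Real.sqrt (q b) + q b := by
        refine le_trans (abs_add_le _ _) ?_
        refine le_trans (add_le_add_left (abs_add_le _ _) _) ?_
        exact add_le_add (add_le_add h1 h2) h3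
      calc |μ (Fin.castLE hk1n b)| * |c b * vX * (A (Fin.castLE hk1n b) Y - c b * vY)
            + c b * vY * (A (Fin.castLE hk1n b) X - c b * vX)
            + (A (Fin.castLE hk1n b) X - c b * vX) * (A (Fin.castLE hk1n b) Y - c b * vY)|
          ≤ 2 * (1 / β * Real.sqrt (q b) + 1 / β * Real.sqrt (q b) + q b) := by
            apply mul_le_mul (hμ2 _) htri (abs_nonneg _) (by norm_num)
        _ = 4 / β * Real.sqrt (q b) + 2 * q b := by ring
    calc |∑ b : Fin (k - 1), T (Fin.castLE hk1n b)|
        ≤ ∑ b : Fin (k - 1), |T (Fin.castLE hk1n b)| := Finset.abs_sum_le_sum_abs _ _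
      _ ≤ ∑ b : Fin (k - 1), (4 / β * Real.sqrt (q b) + 2 * q b) :=
          Finset.sum_le_sum fun b _ => hmain b
      _ = 4 / β * (∑ b, Real.sqrt (q b)) + 2 * (∑ b, q b) := by
          rw [Finset.sum_add_distrib, Finset.mul_sum, Finset.mul_sum]
      _ ≤ 4 / β * (Real.sqrt ((k - 1 : ℕ) : ℝ) * s)
            + 2 * (Real.sqrt ((k - 1 : ℕ) : ℝ) * s) := by
          apply add_le_add
          · exact mul_le_mul_of_nonneg_left hsumsqrtq (by positivity)
          · exact mul_le_mul_of_nonneg_left hQle (by norm_num)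
      _ = (4 / β + 2) * Real.sqrt ((k - 1 : ℕ) : ℝ) * s := by ring
  -- final assembly
  refine le_trans (le_trans (abs_add_le _ _) (add_le_add hbig hS2)) ?_
  have hk2 : Real.sqrt ((k - 1 : ℕ) : ℝ) ≤ Real.sqrt (2 * (k : ℝ)) := by
    apply Real.sqrt_le_sqrt
    have h1 : ((k - 1 : ℕ) : ℝ) ≤ (k : ℝ) := by exact_mod_cast Nat.sub_le k 1
    have h2 : (0 : ℝ) ≤ (k : ℝ) := Nat.cast_nonneg k
    linarith
  have hB2 : (2 : ℝ) ≤ 4 / β + 2 := by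
    have : 0 ≤ 4 / β := by positivity
    linarith
  have hcoef : 0 ≤ (4 / β + 2) / (K * c1) * (Real.sqrt (2 * (k : ℝ)) * s + ε) := by
    apply mul_nonneg (by positivity)
    exact add_nonneg (mul_nonneg (Real.sqrt_nonneg _) hs0) hε
  calc (4 / β + 2) * Real.sqrt ((k - 1 : ℕ) : ℝ) * s + 2 * ε
      ≤ (4 / β + 2) * (Real.sqrt (2 * (k : ℝ)) * s + ε) := by
        have hsB : (4 / β + 2) * Real.sqrt ((k - 1 : ℕ) : ℝ) * s
            ≤ (4 / β + 2) * Real.sqrt (2 * (k : ℝ)) * s := by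
          apply mul_le_mul_of_nonneg_right _ hs0
          exact mul_le_mul_of_nonneg_left hk2 (by positivity)
        have hεB : 2 * ε ≤ (4 / β + 2) * ε := mul_le_mul_of_nonneg_right hB2 hε
        nlinarith [hsB, hεB]
    _ = (4 / β + 2) / (K * c1) * (Real.sqrt (2 * (k : ℝ)) * s + ε) * (K * c1) := by
        field_simp
    _ ≤ (4 / β + 2) / (K * c1) * (Real.sqrt (2 * (k : ℝ)) * s + ε) * vV :=
        mul_le_mul_of_nonneg_left hvolV hcoef
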